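/- For 1 ≤ k ≤ ⌈d/2⌉ and x ∈ (P_n)^d, the k-th derivative of G(x;q) at q = 1, namely ∑_{i=1}^{d-1} ∑_{j=1}^n ΔX^{(i)}_j · wt(i)(wt(i)-1)⋯(wt(i)-k+1), is nonnegative, and equals zero if and only if X^{(k)}_j = X^{(k+1)}_j = ... = X^{(d-k+1)}_j for all 1 ≤ j ≤ n. -/

import Mathlib

open Finset

/-- The cumulative sum `X_j = x₁ + ⋯ + x_j` of `x ∈ ℝ^{n+1}`. -/
noncomputable def cdf {n : ℕ} (x : Fin (n + 1) → ℝ) (j : ℕ) : ℝ :=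
  ∑ k : Fin (n + 1), if (k : ℕ) < j then x k else 0

/-- The `i`-th smallest component (0-indexed) of the tuple `y`. -/
noncomputable def sortedNth {d : ℕ} (y : Fin d → ℝ) (i : ℕ) : ℝ :=
  if h : i < d then y (Tuple.sort y ⟨i, h⟩) else 0

lemma sortedNth_mono {d : ℕ} (y : Fin d → ℝ) {i i' : ℕ} (h : i ≤ i') (h' : i' < d) :
    sortedNth y i ≤ sortedNth y i' := by
  have hi : i < d := lt_of_le_of_lt h h'
  simp only [sortedNth, dif_pos hi, dif_pos h']
  exact Tuple.monotone_sort y (show (⟨i, hi⟩ : Fin d) ≤ ⟨i', h'⟩ from h)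

/-- For `1 ≤ k ≤ ⌈d/2⌉`, the `k`-th derivative of `G(x;q)` at `q = 1`, namely
`D = ∑_{i=1}^{d-1} ∑_{j=1}^{n} ΔX^{(i)}_j · wt(i)(wt(i)-1)⋯(wt(i)-k+1)`, is
nonnegative, and vanishes iff `X^{(k)}_j = ⋯ = X^{(d-k+1)}_j` for all `1 ≤ j ≤ n`
(0-indexed sorted positions `k-1, …, d-k`). -/
theorem stmt14 (n d : ℕ) (hn : 1 ≤ n) (hd : 2 ≤ d) (x : Fin d → Fin (n + 1) → ℝ)
    (hx : ∀ i, (∀ m, 0 ≤ x i m) ∧ ∑ m, x i m = 1)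
    (k : ℕ) (hk1 : 1 ≤ k) (hk2 : k ≤ (d + 1) / 2)
    (D : ℝ)
    (hD : D = ∑ i ∈ Finset.Ico 1 d, ∑ j ∈ Finset.Icc 1 n,
        (sortedNth (fun i' => cdf (x i') j) i - sortedNth (fun i' => cdf (x i') j) (i - 1))
          * ∏ m ∈ Finset.range k, ((min i (d - i) : ℝ) - m)) :
    0 ≤ D ∧
      (D = 0 ↔ ∀ j ∈ Finset.Icc 1 n, ∀ i ∈ Finset.Icc (k - 1) (d - k),
        sortedNth (fun i' => cdf (x i') j) i = sortedNth (fun i' => cdf (x i') j) (k - 1)) := by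
  set s : ℕ → ℕ → ℝ := fun j i => sortedNth (fun i' => cdf (x i') j) i with hs
  set c : ℕ → ℝ := fun i => ∏ m ∈ Finset.range k, ((min i (d - i) : ℝ) - m) with hc
  have hkd : k ≤ d := by omega
  have hcast : ∀ i : ℕ, i ≤ d → (i : ℝ) ⊓ ((d : ℝ) - i) = ((min i (d - i) : ℕ) : ℝ) := by
    intro i hid
    have hsub : ((d - i : ℕ) : ℝ) = (d : ℝ) - i := by
      push_cast [hid]; ring
    rw [← hsub]
    rcases le_total i (d - i) with h | h
    · rw [min_eq_left (by exact_mod_cast h), min_eq_left h]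
    · rw [min_eq_right (by exact_mod_cast h), min_eq_right h]
  -- c i = 0 when the weight is small
  have hczero : ∀ i : ℕ, i ≤ d → min i (d - i) < k → c i = 0 := by
    intro i hid hi
    refine Finset.prod_eq_zero (Finset.mem_range.mpr hi) ?_
    rw [hcast i hid, sub_self]
  -- c i > 0 when the weight is at least k
  have hcpos' : ∀ i : ℕ, i ≤ d → k ≤ min i (d - i) → 0 < c i := by
    intro i hid hmin
    refine Finset.prod_pos ?_
    intro m hm
    rw [Finset.mem_range] at hm
    rw [hcast i hid]
    have : (m : ℝ) < ((min i (d - i) : ℕ) : ℝ) := by exact_mod_cast lt_of_lt_of_le hm hmin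
    linarith
  have hcpos : ∀ i : ℕ, k ≤ i → i ≤ d - k → 0 < c i := fun i h1 h2 =>
    hcpos' i (by omega) (by omega)
  have hcnn : ∀ i : ℕ, i ≤ d → 0 ≤ c i := by
    intro i hid
    rcases lt_or_ge (min i (d - i)) k with h | h
    · rw [hczero i hid h]
    · exact le_of_lt (hcpos' i hid h)
  have hΔ : ∀ i ∈ Finset.Ico 1 d, ∀ j : ℕ, 0 ≤ s j i - s j (i - 1) := by
    intro i hi j
    rw [Finset.mem_Ico] at hi
    have := sortedNth_mono (fun i' => cdf (x i') j) (Nat.sub_le i 1) hi.2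
    simpa [hs] using this
  have hterm : ∀ i ∈ Finset.Ico 1 d, ∀ j ∈ Finset.Icc 1 n, 0 ≤ (s j i - s j (i - 1)) * c i :=
    fun i hi j _ => mul_nonneg (hΔ i hi j) (hcnn i (le_of_lt (Finset.mem_Ico.mp hi).2))
  have h0 : 0 ≤ D := by
    rw [hD]
    exact Finset.sum_nonneg fun i hi => Finset.sum_nonneg fun j hj => hterm i hi j hj
  refine ⟨h0, ?_⟩
  have hiff : D = 0 ↔ ∀ i ∈ Finset.Ico 1 d, ∀ j ∈ Finset.Icc 1 n,
      (s j i - s j (i - 1)) * c i = 0 := by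
    rw [hD, Finset.sum_eq_zero_iff_of_nonneg
      (fun i hi => Finset.sum_nonneg fun j hj => hterm i hi j hj)]
    constructor
    · intro h i hi j hj
      have := (Finset.sum_eq_zero_iff_of_nonneg (fun j hj => hterm i hi j hj)).mp (h i hi)
      exact this j hj
    · intro h i hi
      exact Finset.sum_eq_zero fun j hj => h i hi j hj
  rw [hiff]
  constructor
  · intro hT j hj i hi
    rw [Finset.mem_Icc] at hi
    -- induction on i
    have key : ∀ i : ℕ, k - 1 ≤ i → i ≤ d - k → s j i = s j (k - 1) := by
      intro i
      induction i with
      | zero =>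
        intro h1 _
        have : k - 1 = 0 := by omega
        rw [this]
      | succ m ih =>
        intro h1 h2
        by_cases he : k - 1 = m + 1
        · rw [← he]
        · have hm : k - 1 ≤ m := by omega
          have hrec := ih hm (by omega)
          have hmem : m + 1 ∈ Finset.Ico 1 d := Finset.mem_Ico.mpr ⟨by omega, by omega⟩
          have hc' : c (m + 1) ≠ 0 := ne_of_gt (hcpos (m + 1) (by omega) h2)
          have := hT (m + 1) hmem j hj
          rcases mul_eq_zero.mp this with h | h
          · have : s j (m + 1) = s j m := by
              have hsimp : m + 1 - 1 = m := rfl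
              rw [hsimp] at h
              linarith
            rw [this, hrec]
          · exact absurd h hc'
    exact key i hi.1 hi.2
  · intro hR i hi j hj
    rw [Finset.mem_Ico] at hi
    by_cases h : k ≤ i ∧ i ≤ d - k
    · have h1 : s j i = s j (k - 1) :=
        hR j hj i (Finset.mem_Icc.mpr ⟨by omega, h.2⟩)
      have h2 : s j (i - 1) = s j (k - 1) :=
        hR j hj (i - 1) (Finset.mem_Icc.mpr ⟨by omega, by omega⟩)
      rw [h1, h2, sub_self, zero_mul]
    · have : min i (d - i) < k := by omega
      rw [hczero i (by omega) this, mul_zero]
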